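/- Let I be a nonempty finite set of players, for each i ∈ I let S_i be a nonempty convex subset of ℝ^{d_i}, and for each ordered pair i ≠ j let A_{ij} be a real d_i × d_j matrix. Consider the polymatrix game with utilities u_i(x) = Σ_{j ≠ i} x_iᵀ A_{ij} x_j. Suppose the game is constant-sum, i.e. there is c ∈ ℝ with Σ_{i ∈ I} u_i(x) = c for every profile x ∈ ∏_j S_j, and that for every i and every profile x the supremum sup_{y_i ∈ S_i} u_i(x[i/y_i]) is finite. Then the exploitability Φ(x) = Σ_{i ∈ I} ( sup_{y_i ∈ S_i} u_i(x[i/y_i]) − u_i(x) ) is a convex function on ∏_j S_j. -/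
import Mathlib


open Set Function Matrix

/-- A constant-sum polymatrix game
(`u i x = ∑_{j ≠ i} (x i)ᵀ A i j (x j)`) has convex exploitability. -/
theorem constant_sum_polymatrix_game_convex_exploitability
    {I : Type*} [Fintype I] [Nonempty I] [DecidableEq I]
    (d : I → ℕ)
    (S : ∀ i, Set (Fin (d i) → ℝ))
    (hSne : ∀ i, (S i).Nonempty) (hSconv : ∀ i, Convex ℝ (S i))
    (A : ∀ i j : I, Matrix (Fin (d i)) (Fin (d j)) ℝ)
    (u : ∀ _ : I, (∀ j, Fin (d j) → ℝ) → ℝ)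
    (hu : ∀ i, ∀ x : ∀ j, Fin (d j) → ℝ,
      u i x = ∑ j ∈ Finset.univ.erase i, x i ⬝ᵥ (A i j).mulVec (x j))
    (c : ℝ)
    (hconst : ∀ x ∈ Set.univ.pi S, ∑ i, u i x = c)
    (hbdd : ∀ i, ∀ x ∈ Set.univ.pi S,
      BddAbove ((fun y => u i (Function.update x i y)) '' S i)) :
    ConvexOn ℝ (Set.univ.pi S)
      (fun x => ∑ i, (sSup ((fun y => u i (Function.update x i y)) '' S i) - u i x)) := by
  have hconv : Convex ℝ (Set.univ.pi S) := convex_pi fun i _ => hSconv i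
  refine ⟨hconv, ?_⟩
  intro p hp q hq a b ha hb hab
  have hpq : a • p + b • q ∈ Set.univ.pi S := hconv hp hq ha hb hab
  have key : ∀ i (z : Fin (d i) → ℝ), u i (Function.update (a • p + b • q) i z)
      = a * u i (Function.update p i z) + b * u i (Function.update q i z) := by
    intro i z
    simp only [hu]
    rw [Finset.mul_sum, Finset.mul_sum, ← Finset.sum_add_distrib]
    refine Finset.sum_congr rfl fun j hj => ?_
    have hji : j ≠ i := (Finset.mem_erase.mp hj).1
    simp only [Function.update_self, Function.update_of_ne hji, Pi.add_apply,
      Pi.smul_apply, smul_eq_mul]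
    rw [Matrix.mulVec_add, dotProduct_add, Matrix.mulVec_smul, Matrix.mulVec_smul,
      dotProduct_smul, dotProduct_smul, smul_eq_mul, smul_eq_mul]
  have hs : ∀ i, sSup ((fun z => u i (Function.update (a • p + b • q) i z)) '' S i)
      ≤ a * sSup ((fun z => u i (Function.update p i z)) '' S i)
        + b * sSup ((fun z => u i (Function.update q i z)) '' S i) := by
    intro i
    apply csSup_le ((hSne i).image _)
    rintro _ ⟨z, hz, rfl⟩
    dsimp only
    rw [key i z]
    gcongr
    · exact le_csSup (hbdd i p hp) ⟨z, hz, rfl⟩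
    · exact le_csSup (hbdd i q hq) ⟨z, hz, rfl⟩
  simp only [smul_eq_mul]
  rw [Finset.sum_sub_distrib, Finset.sum_sub_distrib, Finset.sum_sub_distrib,
    hconst _ hpq, hconst _ hp, hconst _ hq]
  have hsum := Finset.sum_le_sum (fun i (_ : i ∈ Finset.univ) => hs i)
  rw [Finset.sum_add_distrib, ← Finset.mul_sum, ← Finset.mul_sum] at hsum
  have hc : a * c + b * c = c := by rw [← add_mul, hab, one_mul]
  linarith [hsum]
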